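/- Let N ≥ 1 and consider words W = W_{N−1}⋯W₁W₀ over the alphabet {B, I, G} satisfying: (i) W₀ = W_{N−1} = G; (ii) every occurrence of BB is immediately preceded and followed by G (as a subword GBBG); (iii) every occurrence of BI appears only as a subword of GBI; (iv) every occurrence of IB appears only as a subword of IBG. Then W decomposes as G^{k_M} V_M G^{k_{M−1}} V_{M−1} ⋯ G^{k_1} V_1 G^{k_0} with M ≥ 0, all k_i ≥ 1, and each V_i in the set {B, BB} ∪ {BI^kB, I^kB, I^k, BI^k : k ≥ 1}. -/

import Mathlib

/-- The alphabet {B, I, G}. -/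
inductive Letter : Type
  | B | I | G
deriving DecidableEq

/-- The admissible excursion words: `B`, `BB`, `BI^kB`, `I^kB`, `I^k`, `BI^k` (k ≥ 1).
Words are written left-to-right; e.g. `I^k B` is `replicate k I ++ [B]`. -/
def goodWord (V : List Letter) : Prop :=
  V = [Letter.B] ∨ V = [Letter.B, Letter.B] ∨
  ∃ k : ℕ, 1 ≤ k ∧
    (V = Letter.B :: (List.replicate k Letter.I ++ [Letter.B]) ∨
     V = List.replicate k Letter.I ++ [Letter.B] ∨
     V = List.replicate k Letter.I ∨
     V = Letter.B :: List.replicate k Letter.I)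

/-- Structural formulation of the hypotheses. -/
def Ok (l : List Letter) : Prop :=
  l.head? = some Letter.G ∧ l.getLast? = some Letter.G ∧
  (∀ x y, l = x ++ [Letter.B, Letter.B] ++ y →
      x.getLast? = some Letter.G ∧ y.head? = some Letter.G) ∧
  (∀ x y, l = x ++ [Letter.B, Letter.I] ++ y → x.getLast? = some Letter.G) ∧
  (∀ x y, l = x ++ [Letter.I, Letter.B] ++ y → y.head? = some Letter.G)

/-- The conclusion, as a predicate. -/
def Dec (l : List Letter) : Prop :=
  ∃ (M : ℕ) (k : ℕ → ℕ) (V : ℕ → List Letter),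
    (∀ i : ℕ, i ≤ M → 1 ≤ k i) ∧
    (∀ i : ℕ, 1 ≤ i → i ≤ M → goodWord (V i)) ∧
    l = ((List.range M).map
          (fun j => List.replicate (k (M - j)) Letter.G ++ V (M - j))).flatten ++
        List.replicate (k 0) Letter.G

lemma last_append {α : Type*} {p x : List α} (hx : x ≠ []) :
    (p ++ x).getLast? = x.getLast? := by
  rw [List.getLast?_append]
  obtain ⟨c, hc⟩ := Option.isSome_iff_exists.mp (List.getLast?_isSome.mpr hx)
  simp [hc]

lemma ok_suffix {l p s : List Letter} (h : Ok l) (hl : l = p ++ s)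
    (hh : s.head? = some Letter.G) : Ok s := by
  obtain ⟨h1, h2, hBB, hBI, hIB⟩ := h
  have hsne : s ≠ [] := by intro e; simp [e] at hh
  refine ⟨hh, ?_, ?_, ?_, ?_⟩
  · rw [hl, last_append hsne] at h2; exact h2
  · intro x y hxy
    have hx : x ≠ [] := by
      rintro rfl; rw [hxy] at hh; simp at hh
    have := hBB (p ++ x) y (by rw [hl, hxy]; simp)
    rwa [last_append hx] at this
  · intro x y hxy
    have hx : x ≠ [] := by
      rintro rfl; rw [hxy] at hh; simp at hh
    have := hBI (p ++ x) y (by rw [hl, hxy]; simp)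
    rwa [last_append hx] at this
  · intro x y hxy
    exact hIB (p ++ x) y (by rw [hl, hxy]; simp)

/-- Extract the maximal run of a letter `c` from the front. -/
lemma run (c : Letter) (t : List Letter) :
    ∃ a u, t = List.replicate a c ++ u ∧ u.head? ≠ some c := by
  refine ⟨(t.takeWhile (· == c)).length, t.dropWhile (· == c), ?_, ?_⟩
  · have h1 : t.takeWhile (· == c) = List.replicate (t.takeWhile (· == c)).length c := by
      rw [List.eq_replicate_iff]
      exact ⟨rfl, fun b hb => by simpa using List.mem_takeWhile_imp hb⟩
    conv_lhs => rw [← List.takeWhile_append_dropWhile (p := (· == c)) (l := t)]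
    rw [← h1]
  · have := List.head?_dropWhile_not (· == c) t
    intro hcon
    rw [hcon] at this
    simp at this

lemma assemble (a : ℕ) (W : List Letter) (M : ℕ) (k : ℕ → ℕ) (V : ℕ → List Letter) :
    List.replicate a Letter.G ++ (W ++
      (((List.range M).map
          (fun j => List.replicate (k (M - j)) Letter.G ++ V (M - j))).flatten ++
        List.replicate (k 0) Letter.G))
    = ((List.range (M + 1)).map
        (fun j => List.replicate ((fun i => if i = M + 1 then a else k i) (M + 1 - j)) Letter.G ++
          (fun i => if i = M + 1 then W else V i) (M + 1 - j))).flatten ++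
      List.replicate ((fun i => if i = M + 1 then a else k i) 0) Letter.G := by
  rw [List.range_succ_eq_map, List.map_cons, List.flatten_cons, List.map_map]
  have hmap : (List.range M).map
      ((fun j => List.replicate ((fun i => if i = M + 1 then a else k i) (M + 1 - j)) Letter.G ++
          (fun i => if i = M + 1 then W else V i) (M + 1 - j)) ∘ Nat.succ)
      = (List.range M).map (fun j => List.replicate (k (M - j)) Letter.G ++ V (M - j)) := by
    apply List.map_congr_left
    intro j hj
    rw [List.mem_range] at hj
    have h1 : M + 1 - Nat.succ j = M - j := by omega
    have h2 : ¬ (M - j = M + 1) := by omega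
    simp [Function.comp, h1, h2]
  rw [hmap]
  simp [List.append_assoc]

lemma finish_step {n a : ℕ} (ha : 1 ≤ a) {l r V' s : List Letter}
    (ih : ∀ l : List Letter, l.length ≤ n → Ok l → Dec l)
    (hOk : Ok l) (hl : l.length ≤ n + 1)
    (hlr : l = List.replicate a Letter.G ++ r)
    (hgood : goodWord V') (hre : r = V' ++ s) (hsh : s.head? = some Letter.G) :
    Dec l := by
  have hls : l = (List.replicate a Letter.G ++ V') ++ s := by
    rw [hlr, hre, List.append_assoc]
  have hOks : Ok s := ok_suffix hOk hls hsh
  have hslen : s.length ≤ n := by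
    have := congrArg List.length hls
    simp [List.length_append] at this
    omega
  obtain ⟨M, k, V, hk, hV, hs⟩ := ih s hslen hOks
  refine ⟨M + 1, fun i => if i = M + 1 then a else k i,
    fun i => if i = M + 1 then V' else V i, ?_, ?_, ?_⟩
  · intro i hi
    by_cases h : i = M + 1
    · simp [h, ha]
    · simp only [if_neg h]; exact hk i (by omega)
  · intro i hi1 hi2
    by_cases h : i = M + 1
    · simpa [h] using hgood
    · simp only [if_neg h]; exact hV i hi1 (by omega)
  · rw [hlr, hre, hs]
    exact assemble a V' M k V

lemma endI_contra {l : List Letter} (h2 : l.getLast? = some Letter.G)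
    {p : List Letter} {c : ℕ} (hc : 1 ≤ c)
    (hl : l = p ++ List.replicate c Letter.I) : False := by
  obtain ⟨c', rfl⟩ : ∃ c', c = c' + 1 := ⟨c - 1, by omega⟩
  rw [hl, last_append (by simp)] at h2
  rw [List.getLast?_replicate] at h2
  simp at h2

lemma decomp : ∀ n : ℕ, ∀ l : List Letter, l.length ≤ n → Ok l → Dec l := by
  intro n
  induction n with
  | zero =>
    intro l hl hOk
    have : l = [] := List.length_eq_zero_iff.mp (Nat.le_zero.mp hl)
    rw [this] at hOk
    simp [Ok] at hOk
  | succ n ih =>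
    intro l hl hOk
    obtain ⟨h1, h2, hBB, hBI, hIB⟩ := hOk
    have hOk' : Ok l := ⟨h1, h2, hBB, hBI, hIB⟩
    obtain ⟨a, r, hlr, hr⟩ := run Letter.G l
    have ha : 1 ≤ a := by
      rcases Nat.eq_zero_or_pos a with h | h
      · subst h; simp at hlr; rw [← hlr] at hr; exact absurd h1 hr
      · exact h
    match r, hr with
    | [], _ =>
      refine ⟨0, fun _ => a, fun _ => [], fun i _ => ha, by omega, ?_⟩
      simpa using hlr
    | Letter.G :: t, hr => exact absurd rfl hr
    | Letter.B :: t, hr =>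
      match t, hlr with
      | [], hlr =>
        exfalso
        rw [hlr, last_append (by simp)] at h2
        simp at h2
      | Letter.G :: u, hlr =>
        exact finish_step ha ih hOk' hl hlr (Or.inl rfl) rfl rfl
      | Letter.B :: u, hlr =>
        have hu : u.head? = some Letter.G :=
          (hBB (List.replicate a Letter.G) u (by rw [hlr]; simp)).2
        exact finish_step ha ih hOk' hl hlr (Or.inr (Or.inl rfl)) rfl hu
      | Letter.I :: u, hlr =>
        obtain ⟨c, w, htw, hw⟩ := run Letter.I (Letter.I :: u)
        have hc : 1 ≤ c := by
          rcases Nat.eq_zero_or_pos c with h | h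
          · subst h; simp at htw; rw [← htw] at hw; simp at hw
          · exact h
        obtain ⟨c', rfl⟩ : ∃ c', c = c' + 1 := ⟨c - 1, by omega⟩
        have hlr2 : l = List.replicate a Letter.G ++ (Letter.B :: (List.replicate (c' + 1) Letter.I ++ w)) := by
          rw [hlr, htw]
        match w, hw with
        | [], hw =>
          exfalso
          refine endI_contra h2 (Nat.le_add_left 1 c')
            (p := List.replicate a Letter.G ++ [Letter.B]) ?_
          rw [hlr2]; simp
        | Letter.I :: v, hw => exact absurd rfl hw
        | Letter.G :: v, hw =>
          refine finish_step (s := Letter.G :: v) ha ih hOk' hl hlr2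
            (Or.inr (Or.inr ⟨c' + 1, by omega, Or.inr (Or.inr (Or.inr rfl))⟩)) rfl rfl
        | Letter.B :: v, hw =>
          have hv : v.head? = some Letter.G := by
            apply hIB (List.replicate a Letter.G ++ Letter.B :: List.replicate c' Letter.I) v
            rw [hlr2, List.replicate_succ']
            simp
          refine finish_step ha ih hOk' hl hlr2
            (Or.inr (Or.inr ⟨c' + 1, by omega, Or.inl rfl⟩)) ?_ hv
          simp
    | Letter.I :: t, hr =>
      obtain ⟨c, w, htw, hw⟩ := run Letter.I (Letter.I :: t)
      have hc : 1 ≤ c := by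
        rcases Nat.eq_zero_or_pos c with h | h
        · subst h; simp at htw; rw [← htw] at hw; simp at hw
        · exact h
      obtain ⟨c', rfl⟩ : ∃ c', c = c' + 1 := ⟨c - 1, by omega⟩
      have hlr2 : l = List.replicate a Letter.G ++ (List.replicate (c' + 1) Letter.I ++ w) := by
        rw [hlr, htw]
      match w, hw with
      | [], hw =>
        exfalso
        refine endI_contra h2 (Nat.le_add_left 1 c') (p := List.replicate a Letter.G) ?_
        rw [hlr2]; simp
      | Letter.I :: v, hw => exact absurd rfl hw
      | Letter.G :: v, hw =>
        refine finish_step ha ih hOk' hl hlr2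
          (Or.inr (Or.inr ⟨c' + 1, by omega, Or.inr (Or.inr (Or.inl rfl))⟩)) rfl rfl
      | Letter.B :: v, hw =>
        have hv : v.head? = some Letter.G := by
          apply hIB (List.replicate a Letter.G ++ List.replicate c' Letter.I) v
          rw [hlr2, List.replicate_succ']
          simp
        refine finish_step ha ih hOk' hl hlr2
          (Or.inr (Or.inr ⟨c' + 1, by omega, Or.inr (Or.inl rfl)⟩)) ?_ hv
        simp

lemma idx_lemma {l x y : List Letter} {a b : Letter} (h : l = x ++ [a, b] ++ y) :
    l[x.length]? = some a ∧ l[x.length + 1]? = some b ∧ l[x.length + 2]? = y.head? := by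
  subst h
  rw [List.append_assoc]
  refine ⟨?_, ?_, ?_⟩ <;>
    rw [List.getElem?_append_right (by omega)] <;>
    simp [List.head?_eq_getElem?]

lemma idx_last {l x r : List Letter} (h : l = x ++ r) {j : ℕ} (hj : x.length = j + 1)
    (hjG : l[j]? = some Letter.G) : x.getLast? = some Letter.G := by
  subst h
  rw [List.getElem?_append_left (by omega)] at hjG
  rw [List.getLast?_eq_getElem?, hj]
  simpa using hjG

/-- Combinatorial decomposition: a word over {B,I,G} beginning and ending with `G`,
in which `BB` occurs only inside `GBBG`, `BI` only inside `GBI`, and `IB` only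
inside `IBG`, decomposes as `G^{k_M} V_M G^{k_{M-1}} V_{M-1} ⋯ G^{k_1} V_1 G^{k_0}`
with all `k_i ≥ 1` and each `V_i` an admissible excursion word. -/
theorem stmt_12 (N : ℕ) (hN : 1 ≤ N) (l : List Letter) (hlen : l.length = N)
    (hfirst : l.head? = some Letter.G) (hlast : l.getLast? = some Letter.G)
    (hBB : ∀ i : ℕ, l[i]? = some Letter.B → l[i+1]? = some Letter.B →
      (∃ j : ℕ, i = j + 1 ∧ l[j]? = some Letter.G) ∧ l[i+2]? = some Letter.G)
    (hBI : ∀ i : ℕ, l[i]? = some Letter.B → l[i+1]? = some Letter.I →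
      ∃ j : ℕ, i = j + 1 ∧ l[j]? = some Letter.G)
    (hIB : ∀ i : ℕ, l[i]? = some Letter.I → l[i+1]? = some Letter.B →
      l[i+2]? = some Letter.G) :
    ∃ (M : ℕ) (k : ℕ → ℕ) (V : ℕ → List Letter),
      (∀ i : ℕ, i ≤ M → 1 ≤ k i) ∧
      (∀ i : ℕ, 1 ≤ i → i ≤ M → goodWord (V i)) ∧
      l = ((List.range M).map
            (fun j => List.replicate (k (M - j)) Letter.G ++ V (M - j))).flatten ++
          List.replicate (k 0) Letter.G := by
  have hOk : Ok l := by
    refine ⟨hfirst, hlast, ?_, ?_, ?_⟩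
    · intro x y hxy
      obtain ⟨e1, e2, e3⟩ := idx_lemma hxy
      obtain ⟨⟨j, hj, hjG⟩, hG2⟩ := hBB x.length e1 e2
      refine ⟨idx_last (by rw [hxy, List.append_assoc]) hj hjG, ?_⟩
      rw [← e3]; exact hG2
    · intro x y hxy
      obtain ⟨e1, e2, _⟩ := idx_lemma hxy
      obtain ⟨j, hj, hjG⟩ := hBI x.length e1 e2
      exact idx_last (by rw [hxy, List.append_assoc]) hj hjG
    · intro x y hxy
      obtain ⟨e1, e2, e3⟩ := idx_lemma hxy
      have := hIB x.length e1 e2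
      rw [← e3]; exact this
  exact decomp l.length l le_rfl hOk
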